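/- The function $\phi(x,y) = e^{-\sqrt{x^2+y^2}}$ on $\mathbb{R}^2$ belongs to the Sobolev space $H^s(\mathbb{R}^2)$ for every $0 < s < 2$. -/

import Mathlib

open MeasureTheory FourierTransform

section GlasserSubordination
open Set Real


lemma intg1 (a : ℝ) : IntegrableOn (fun t : ℝ => Real.exp (-t^2 - a^2/t^2)) (Ioi 0) := by
  apply Integrable.mono' (g := fun t : ℝ => Real.exp (-t^2))
  · exact (integrable_exp_neg_mul_sq one_pos).integrableOn.congr_fun
      (fun t _ => by beta_reduce; rw [neg_one_mul]) measurableSet_Ioi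
  · exact (Real.measurable_exp.comp ((measurable_id.pow_const 2).neg.sub
      ((measurable_const (a := a^2)).div (measurable_id.pow_const 2)))).aestronglyMeasurable
  · filter_upwards with t
    rw [Real.norm_eq_abs, abs_of_pos (Real.exp_pos _)]
    apply Real.exp_le_exp.2
    have : 0 ≤ a^2/t^2 := by positivity
    linarith

lemma sq_expand {a t : ℝ} (ht : t ≠ 0) : -(t - a/t)^2 = -t^2 - a^2/t^2 + 2*a := by
  field_simp
  ring

lemma intg2 (a : ℝ) : IntegrableOn (fun t : ℝ => Real.exp (-(t - a/t)^2)) (Ioi 0) := by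
  refine IntegrableOn.congr_fun ((intg1 a).const_mul (Real.exp (2*a)))
    (fun t ht => ?_) measurableSet_Ioi
  rw [← Real.exp_add, add_comm, ← sq_expand (ne_of_gt ht)]

variable {a : ℝ}

lemma my_inv_img (ha : 0 < a) : (fun t : ℝ => a/t) '' (Ioi 0) = Ioi 0 := by
  ext y; constructor
  · rintro ⟨t, ht, rfl⟩; exact div_pos ha ht
  · intro hy
    refine ⟨a/y, div_pos ha hy, ?_⟩
    field_simp

lemma my_inv_deriv : ∀ t ∈ Ioi (0:ℝ), HasDerivWithinAt (fun t : ℝ => a/t) (-(a/t^2)) (Ioi 0) t := by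
  intro t ht
  have : HasDerivAt (fun t : ℝ => a/t) (a * (-(t^2)⁻¹)) t := by
    simpa [div_eq_mul_inv] using (hasDerivAt_inv (ne_of_gt ht)).const_mul a
  exact this.hasDerivWithinAt.congr_deriv (by rw [div_eq_mul_inv]; ring)

lemma my_inv_inj (ha : 0 < a) : InjOn (fun t : ℝ => a/t) (Ioi 0) := by
  intro x hx y hy h
  simp only at h
  field_simp [ne_of_gt (show (0:ℝ) < x from hx), ne_of_gt (show (0:ℝ) < y from hy)] at h
  exact h.symm

lemma subst_inv (ha : 0 < a) (g : ℝ → ℝ) :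
    ∫ t in Ioi (0:ℝ), g t = ∫ t in Ioi (0:ℝ), (a/t^2) * g (a/t) := by
  calc ∫ t in Ioi (0:ℝ), g t = ∫ t in (fun t : ℝ => a/t) '' (Ioi 0), g t := by rw [my_inv_img ha]
    _ = ∫ t in Ioi (0:ℝ), |(-(a/t^2))| • g (a/t) :=
        integral_image_eq_integral_abs_deriv_smul measurableSet_Ioi my_inv_deriv (my_inv_inj ha) g
    _ = ∫ t in Ioi (0:ℝ), (a/t^2) * g (a/t) := by
        refine setIntegral_congr_fun measurableSet_Ioi (fun t ht => ?_)
        have ht' : (0:ℝ) < t := ht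
        rw [abs_neg, abs_of_pos (by positivity), smul_eq_mul]

lemma subst_inv_integrable (ha : 0 < a) {g : ℝ → ℝ} (hg : IntegrableOn g (Ioi 0)) :
    IntegrableOn (fun t : ℝ => (a/t^2) * g (a/t)) (Ioi 0) := by
  have h := (integrableOn_image_iff_integrableOn_abs_deriv_smul measurableSet_Ioi
    my_inv_deriv (my_inv_inj ha) g).mp (by rw [my_inv_img ha]; exact hg)
  refine IntegrableOn.congr_fun h (fun t ht => ?_) measurableSet_Ioi
  have ht' : (0:ℝ) < t := ht
  rw [abs_neg, abs_of_pos (by positivity), smul_eq_mul]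

lemma glasser {a : ℝ} (ha : 0 < a) :
    ∫ t in Ioi (0:ℝ), Real.exp (-t^2 - a^2/t^2) = (Real.sqrt π / 2) * Real.exp (-2*a) := by
  set f : ℝ → ℝ := fun t => t - a/t with hf
  have himg : f '' (Ioi 0) = univ := by
    refine eq_univ_of_forall (fun u => ?_)
    set d : ℝ := Real.sqrt (u^2 + 4*a) with hd
    have hd2 : d^2 = u^2 + 4*a := Real.sq_sqrt (by positivity)
    have hdu : |u| < d := by
      nlinarith [abs_nonneg u, sq_abs u, Real.sqrt_nonneg (u^2+4*a)]
    have ht : 0 < (u + d)/2 := by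
      have := neg_abs_le u
      linarith [abs_lt.mp hdu]
    refine ⟨(u+d)/2, ht, ?_⟩
    have hne : u + d ≠ 0 := by
      intro h0
      rw [show (u+d)/2 = 0/2 by rw [h0]] at ht
      norm_num at ht
    simp only [hf]
    field_simp
    nlinarith [hd2]
  have hderiv : ∀ t ∈ Ioi (0:ℝ), HasDerivWithinAt f (1 + a/t^2) (Ioi 0) t := by
    intro t ht
    have h1 : HasDerivAt (fun t : ℝ => a/t) (a * (-(t^2)⁻¹)) t := by
      simpa [div_eq_mul_inv] using (hasDerivAt_inv (ne_of_gt ht)).const_mul a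
    have h2 : HasDerivAt f (1 - a * (-(t^2)⁻¹)) t := (hasDerivAt_id t).sub h1
    exact h2.hasDerivWithinAt.congr_deriv (by rw [div_eq_mul_inv]; ring)
  have hinj : InjOn f (Ioi 0) := by
    have hmono : StrictMonoOn f (Ioi 0) := by
      intro x hx y hy hxy
      have hx' : (0:ℝ) < x := hx
      have hy' : (0:ℝ) < y := hy
      have h3 : a/y ≤ a/x := div_le_div_of_nonneg_left (le_of_lt ha) hx' (le_of_lt hxy)
      simp only [hf]
      linarith
    exact hmono.injOn
  have key : √π = ∫ t in Ioi (0:ℝ), (1 + a/t^2) * Real.exp (-(t - a/t)^2) := by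
    have h1 : ∫ u : ℝ, Real.exp (-u^2) = √π := by
      have := integral_gaussian 1
      simp only [neg_one_mul, div_one] at this
      simpa using this
    calc √π = ∫ u in f '' (Ioi 0), Real.exp (-u^2) := by
          rw [himg, Measure.restrict_univ, h1]
      _ = ∫ t in Ioi (0:ℝ), |1 + a/t^2| • Real.exp (-(f t)^2) :=
          integral_image_eq_integral_abs_deriv_smul measurableSet_Ioi hderiv hinj _
      _ = ∫ t in Ioi (0:ℝ), (1 + a/t^2) * Real.exp (-(t - a/t)^2) := by
          refine setIntegral_congr_fun measurableSet_Ioi (fun t ht => ?_)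
          have ht' : (0:ℝ) < t := ht
          rw [abs_of_pos (by positivity), smul_eq_mul]
  have hi2 : IntegrableOn (fun t : ℝ => (a/t^2) * Real.exp (-(t - a/t)^2)) (Ioi 0) := by
    refine IntegrableOn.congr_fun (subst_inv_integrable ha (intg2 a)) (fun t ht => ?_)
      measurableSet_Ioi
    have ht' : (0:ℝ) < t := ht
    have hat : a/(a/t) = t := by field_simp
    rw [hat]
    congr 2
    ring
  have hI2 : ∫ t in Ioi (0:ℝ), (a/t^2) * Real.exp (-(t - a/t)^2)
      = ∫ t in Ioi (0:ℝ), Real.exp (-(t - a/t)^2) := by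
    rw [subst_inv ha (fun t => Real.exp (-(t - a/t)^2))]
    refine setIntegral_congr_fun measurableSet_Ioi (fun t ht => ?_)
    have ht' : (0:ℝ) < t := ht
    have hat : a/(a/t) = t := by field_simp
    simp only [hat]
    congr 2
    ring
  have hsplit : ∫ t in Ioi (0:ℝ), (1 + a/t^2) * Real.exp (-(t - a/t)^2)
      = (∫ t in Ioi (0:ℝ), Real.exp (-(t - a/t)^2))
        + ∫ t in Ioi (0:ℝ), (a/t^2) * Real.exp (-(t - a/t)^2) := by
    rw [← integral_add (intg2 a) hi2]
    refine setIntegral_congr_fun measurableSet_Ioi (fun t ht => ?_)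
    ring
  have hI1 : ∫ t in Ioi (0:ℝ), Real.exp (-(t - a/t)^2) = √π / 2 := by
    rw [hsplit, hI2] at key
    linarith
  calc ∫ t in Ioi (0:ℝ), Real.exp (-t^2 - a^2/t^2)
      = ∫ t in Ioi (0:ℝ), Real.exp (-2*a) * Real.exp (-(t - a/t)^2) := by
        refine setIntegral_congr_fun measurableSet_Ioi (fun t ht => ?_)
        have ht' : (0:ℝ) < t := ht
        rw [← Real.exp_add, sq_expand (ne_of_gt ht')]
        ring_nf
    _ = Real.exp (-2*a) * (√π / 2) := by rw [integral_const_mul, hI1]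
    _ = (√π / 2) * Real.exp (-2*a) := by ring



lemma subord {c : ℝ} (hc : 0 ≤ c) :
    ∫ u in Ioi (0:ℝ), u^(-(1:ℝ)/2) * Real.exp (-u) * Real.exp (-c^2/(4*u))
      = √π * Real.exp (-c) := by
  have himg : (fun t : ℝ => t^2) '' (Ioi 0) = Ioi 0 := by
    ext y; constructor
    · rintro ⟨t, ht, rfl⟩; exact pow_pos (mem_Ioi.mp ht) 2
    · intro hy
      exact ⟨Real.sqrt y, Real.sqrt_pos.2 hy, Real.sq_sqrt (le_of_lt hy)⟩
  have hderiv : ∀ t ∈ Ioi (0:ℝ), HasDerivWithinAt (fun t : ℝ => t^2) (2*t) (Ioi 0) t := by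
    intro t ht
    simpa using (hasDerivAt_pow 2 t).hasDerivWithinAt
  have hinj : InjOn (fun t : ℝ => t^2) (Ioi 0) := by
    intro x hx y hy h
    have hx' : (0:ℝ) < x := hx
    have hy' : (0:ℝ) < y := hy
    simp only at h
    nlinarith
  have step : ∫ u in Ioi (0:ℝ), u^(-(1:ℝ)/2) * Real.exp (-u) * Real.exp (-c^2/(4*u))
      = ∫ t in Ioi (0:ℝ), 2 * Real.exp (-t^2 - (c/2)^2/t^2) := by
    calc ∫ u in Ioi (0:ℝ), u^(-(1:ℝ)/2) * Real.exp (-u) * Real.exp (-c^2/(4*u))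
        = ∫ u in (fun t : ℝ => t^2) '' (Ioi 0),
            u^(-(1:ℝ)/2) * Real.exp (-u) * Real.exp (-c^2/(4*u)) := by rw [himg]
      _ = ∫ t in Ioi (0:ℝ), |2*t| •
            ((t^2)^(-(1:ℝ)/2) * Real.exp (-t^2) * Real.exp (-c^2/(4*t^2))) :=
          integral_image_eq_integral_abs_deriv_smul measurableSet_Ioi hderiv hinj _
      _ = ∫ t in Ioi (0:ℝ), 2 * Real.exp (-t^2 - (c/2)^2/t^2) := by
          refine setIntegral_congr_fun measurableSet_Ioi (fun t ht => ?_)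
          have ht' : (0:ℝ) < t := ht
          have hr : (t^2)^(-(1:ℝ)/2) = t⁻¹ := by
            rw [← Real.rpow_natCast t 2, ← Real.rpow_mul (le_of_lt ht')]
            norm_num
            exact Real.rpow_neg_one t
          rw [abs_of_pos (by positivity), smul_eq_mul, hr,
            show -t^2 - (c/2)^2/t^2 = -t^2 + -c^2/(4*t^2) by ring, Real.exp_add]
          field_simp
  rw [step]
  rcases eq_or_lt_of_le hc with hc0 | hc0
  · subst hc0
    have h0 : ∀ t : ℝ, (-t^2 - ((0:ℝ)/2)^2/t^2 : ℝ) = -1 * t^2 := fun t => by ring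
    have h1 : ∫ t in Ioi (0:ℝ), 2 * Real.exp (-t^2 - ((0:ℝ)/2)^2/t^2) = 2 * (√(π/1)/2) := by
      rw [integral_const_mul, ← integral_gaussian_Ioi 1]
      congr 1
      exact setIntegral_congr_fun measurableSet_Ioi (fun t _ => by rw [h0 t])
    rw [h1, neg_zero, Real.exp_zero, mul_one, div_one]
    ring
  · rw [integral_const_mul, glasser (by positivity : (0:ℝ) < c/2)]
    rw [show -2*(c/2) = -c by ring]
    ring

end GlasserSubordination

section MainProof
open Set Real FourierTransform RealInnerProductSpace Complex

noncomputable section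
abbrev E2 := EuclideanSpace ℝ (Fin 2)

lemma meas_aux (c : ℝ) : Measurable
    (fun u : ℝ => u^(-(1:ℝ)/2) * Real.exp (-u) * Real.exp (-c^2/(4*u))) := by
  have m1 : Measurable fun u : ℝ => u ^ (-(1:ℝ)/2) :=
    measurable_id.pow measurable_const
  have m2 : Measurable fun u : ℝ => Real.exp (-u) :=
    Real.measurable_exp.comp measurable_neg
  have m3 : Measurable fun u : ℝ => Real.exp (-c^2/(4*u)) :=
    Real.measurable_exp.comp (measurable_const.div (measurable_const.mul measurable_id))
  exact (m1.mul m2).mul m3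

lemma subord_integrable (c : ℝ) :
    IntegrableOn (fun u : ℝ => u^(-(1:ℝ)/2) * Real.exp (-u) * Real.exp (-c^2/(4*u)))
      (Ioi 0) := by
  apply Integrable.mono' (g := fun u : ℝ => Real.exp (-u) * u^((1:ℝ)/2 - 1))
  · exact Real.GammaIntegral_convergent (by norm_num)
  · exact ((meas_aux c).aestronglyMeasurable).restrict
  · filter_upwards [ae_restrict_mem measurableSet_Ioi] with u hu
    have hu' : (0:ℝ) < u := hu
    rw [Real.norm_eq_abs, _root_.abs_of_nonneg (by positivity : (0:ℝ) ≤ u^(-(1:ℝ)/2) * Real.exp (-u) * Real.exp (-c^2/(4*u)))]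
    have h1 : Real.exp (-c^2/(4*u)) ≤ 1 := by
      rw [← Real.exp_zero]
      apply Real.exp_le_exp.2
      have h : (0:ℝ) ≤ c^2/(4*u) := by positivity
      have h' : -c^2/(4*u) = -(c^2/(4*u)) := by ring
      rw [h']
      linarith
    calc u^(-(1:ℝ)/2) * Real.exp (-u) * Real.exp (-c^2/(4*u))
        ≤ u^(-(1:ℝ)/2) * Real.exp (-u) * 1 :=
          mul_le_mul_of_nonneg_left h1 (by positivity)
      _ = Real.exp (-u) * u^((1:ℝ)/2 - 1) := by
          rw [mul_one, mul_comm]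
          norm_num

lemma expphi_integrable : Integrable (fun p : E2 => Real.exp (-‖p‖)) := by
  apply Integrable.mono' (g := fun p : E2 => (27 * Real.exp 1) * (1 + ‖p‖)^(-(3:ℝ)))
  · exact (integrable_one_add_norm (by simp [finrank_euclideanSpace_fin]; norm_num)).const_mul _
  · exact (Real.continuous_exp.comp continuous_norm.neg).aestronglyMeasurable
  · filter_upwards with p
    rw [Real.norm_eq_abs, abs_of_pos (Real.exp_pos _)]
    have hp : (0:ℝ) ≤ ‖p‖ := norm_nonneg p
    have h1 : (1 + ‖p‖)/3 + 1 ≤ Real.exp ((1 + ‖p‖)/3) := Real.add_one_le_exp _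
    have h2 : ((1 + ‖p‖)/3)^3 ≤ Real.exp (1 + ‖p‖) := by
      have h3 : Real.exp (1 + ‖p‖) = (Real.exp ((1 + ‖p‖)/3))^3 := by
        rw [← Real.exp_nat_mul]
        congr 1
        push_cast
        ring
      rw [h3]
      apply pow_le_pow_left₀ (by positivity)
      linarith
    have h5 : (1 + ‖p‖)^3 / 27 ≤ Real.exp (1 + ‖p‖) := by
      calc (1 + ‖p‖)^3 / 27 = ((1 + ‖p‖)/3)^3 := by ring
        _ ≤ Real.exp (1 + ‖p‖) := h2
    have h6 : (Real.exp (1 + ‖p‖))⁻¹ ≤ 27 * ((1 + ‖p‖)^3)⁻¹ := by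
      have h7 := inv_anti₀ (show (0:ℝ) < (1+‖p‖)^3/27 by positivity) h5
      rw [inv_div] at h7
      rw [div_eq_mul_inv] at h7
      linarith
    have h4 : (1 + ‖p‖)^(-(3:ℝ)) = ((1 + ‖p‖)^3)⁻¹ := by
      rw [← Real.rpow_natCast (1 + ‖p‖) 3, ← Real.rpow_neg (by positivity)]
      norm_num
    rw [h4, show Real.exp (-‖p‖) = Real.exp 1 * Real.exp (-(1 + ‖p‖)) by
      rw [← Real.exp_add]; ring_nf, Real.exp_neg]
    calc Real.exp 1 * (Real.exp (1 + ‖p‖))⁻¹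
        ≤ Real.exp 1 * (27 * ((1 + ‖p‖)^3)⁻¹) :=
          mul_le_mul_of_nonneg_left h6 (Real.exp_pos 1).le
      _ = 27 * Real.exp 1 * ((1 + ‖p‖)^3)⁻¹ := by ring

lemma ftval (ζ : E2) :
    𝓕 (fun p : E2 => (Real.exp (-‖p‖) : ℂ)) ζ
      = (((2*π) * (1 + 4*π^2*‖ζ‖^2)^(-(3:ℝ)/2) : ℝ) : ℂ) := by
  set A : ℝ := 1 + 4*π^2*‖ζ‖^2 with hA
  have hA0 : 0 < A := by positivity
  set e : E2 → ℂ := fun p => Complex.exp ((↑(-2 * π * ⟪p, ζ⟫) * Complex.I)) with he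
  set h : E2 → ℝ → ℝ :=
    fun p u => u^(-(1:ℝ)/2) * Real.exp (-u) * Real.exp (-‖p‖^2/(4*u)) with hh
  set F : E2 → ℝ → ℂ := fun p u => e p * ((h p u : ℝ) : ℂ) with hF
  have hsqrtpi : Real.sqrt π ≠ 0 := ne_of_gt (Real.sqrt_pos.2 Real.pi_pos)
  have hsub : ∀ p : E2, ∫ u in Ioi (0:ℝ), h p u = √π * Real.exp (-‖p‖) :=
    fun p => subord (norm_nonneg p)
  have henorm : ∀ p : E2, ‖e p‖ = 1 := fun p => Complex.norm_exp_ofReal_mul_I _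
  have hhnonneg : ∀ (p : E2) (u : ℝ), u ∈ Ioi (0:ℝ) → 0 ≤ h p u := by
    intro p u hu
    have hu' : (0:ℝ) < u := hu
    simp only [hh]
    positivity
  have hmeasF : AEStronglyMeasurable (Function.uncurry F)
      ((volume : Measure E2).prod (volume.restrict (Ioi 0))) := by
    have ce : Continuous e := by
      apply Complex.continuous_exp.comp
      apply Continuous.mul _ continuous_const
      exact Complex.continuous_ofReal.comp
        (continuous_const.mul (continuous_id.inner continuous_const))
    have mh : Measurable (fun q : E2 × ℝ => h q.1 q.2) := by
      apply Measurable.mul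
      apply Measurable.mul
      · exact measurable_snd.pow measurable_const
      · exact Real.measurable_exp.comp measurable_snd.neg
      · exact Real.measurable_exp.comp
          (((measurable_fst.norm.pow_const 2).neg).div (measurable_snd.const_mul 4))
    exact ((ce.measurable.comp measurable_fst).mul
      (Complex.measurable_ofReal.comp mh)).aestronglyMeasurable
  have hnormint : ∀ p : E2, ∫ u in Ioi (0:ℝ), ‖F p u‖ = √π * Real.exp (-‖p‖) := by
    intro p
    rw [← hsub p]
    refine setIntegral_congr_fun measurableSet_Ioi (fun u hu => ?_)
    rw [norm_mul, henorm p, one_mul, Complex.norm_real, Real.norm_eq_abs,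
      _root_.abs_of_nonneg (hhnonneg p u hu)]
  have hFint : Integrable (Function.uncurry F)
      ((volume : Measure E2).prod (volume.restrict (Ioi 0))) := by
    rw [integrable_prod_iff hmeasF]
    constructor
    · filter_upwards with p
      exact ((subord_integrable ‖p‖).ofReal).const_mul (e p)
    · simp only [Function.uncurry]
      refine (Integrable.congr ((expphi_integrable.const_mul (√π)).const_mul 1) ?_)
      filter_upwards with p
      rw [one_mul, ← hnormint p]
  have hinner : ∀ u ∈ Ioi (0:ℝ), (∫ p : E2, F p u)
      = (((4*π) * (u^((3:ℝ)/2 - 1) * Real.exp (-(A*u))) : ℝ) : ℂ) := by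
    intro u hu
    have hu' : (0:ℝ) < u := hu
    have hb : (0:ℝ) < (1/(4*u)) := by positivity
    have hbc : (0:ℂ).re < ((1/(4*u) : ℝ) : ℂ).re := by simpa using hb
    have step1 : (∫ p : E2, F p u)
        = ((u^(-(1:ℝ)/2) * Real.exp (-u) : ℝ) : ℂ)
          * ∫ p : E2, e p * Complex.exp (-((1/(4*u) : ℝ) : ℂ) * ‖p‖^2) := by
      rw [← integral_const_mul]
      congr 1 with p
      rw [hF, hh]
      have : (-((1/(4*u) : ℝ) : ℂ) * (‖p‖:ℂ)^2) = ((-‖p‖^2/(4*u) : ℝ) : ℂ) := by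
        push_cast
        ring
      rw [this, ← Complex.ofReal_exp]
      push_cast
      ring
    have step2 : (∫ p : E2, e p * Complex.exp (-((1/(4*u) : ℝ) : ℂ) * ‖p‖^2))
        = 𝓕 (fun p : E2 => Complex.exp (-((1/(4*u) : ℝ) : ℂ) * ‖p‖^2)) ζ := by
      simp only [Real.fourier_eq', smul_eq_mul, he]
    rw [step1, step2, fourier_gaussian_innerProductSpace (by simpa using hb) ζ]
    rw [finrank_euclideanSpace_fin]
    have e1 : ((2:ℕ) / 2 : ℂ) = 1 := by norm_num
    rw [e1, Complex.cpow_one]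
    have e2 : ((π:ℂ) / ((1/(4*u) : ℝ) : ℂ)) = ((4*π*u : ℝ) : ℂ) := by
      have : ((1/(4*u) : ℝ) : ℂ) ≠ 0 := by
        simp only [ne_eq, Complex.ofReal_eq_zero]
        positivity
      field_simp
      push_cast
      field_simp [Complex.ofReal_ne_zero.mpr hu'.ne']
    have e3 : (-(π:ℂ)^2 * (‖ζ‖:ℂ)^2 / ((1/(4*u) : ℝ) : ℂ))
        = ((-(4*π^2*‖ζ‖^2)*u : ℝ) : ℂ) := by
      have h4u : ((4:ℂ)*u) ≠ 0 := by
        simp only [ne_eq, mul_eq_zero, OfNat.ofNat_ne_zero, false_or, Complex.ofReal_eq_zero]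
        exact ne_of_gt hu'
      push_cast
      field_simp
    rw [e2, e3, ← Complex.ofReal_exp, ← Complex.ofReal_mul, ← Complex.ofReal_mul]
    congr 1
    have e4 : u^(-(1:ℝ)/2) * u = u^((3:ℝ)/2 - 1) := by
      nth_rewrite 2 [show u = u^(1:ℝ) by rw [Real.rpow_one]]
      rw [← Real.rpow_add hu']
      norm_num
    have e5 : Real.exp (-u) * Real.exp (-(4*π^2*‖ζ‖^2)*u) = Real.exp (-(A*u)) := by
      rw [← Real.exp_add, hA]
      ring_nf
    calc u^(-(1:ℝ)/2) * Real.exp (-u) * (4*π*u*Real.exp (-(4*π^2*‖ζ‖^2)*u))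
        = (4*π) * ((u^(-(1:ℝ)/2) * u) * (Real.exp (-u) * Real.exp (-(4*π^2*‖ζ‖^2)*u))) := by
          ring
      _ = (4*π) * (u^((3:ℝ)/2 - 1) * Real.exp (-(A*u))) := by rw [e4, e5]
  -- assemble
  have hcoer : ∀ p : E2, (Real.exp (-‖p‖) : ℂ)
      = ((√π)⁻¹ : ℝ) * ∫ u in Ioi (0:ℝ), ((h p u : ℝ) : ℂ) := by
    intro p
    rw [show (∫ u in Ioi (0:ℝ), ((h p u : ℝ) : ℂ))
        = ((∫ u in Ioi (0:ℝ), h p u : ℝ) : ℂ) from integral_ofReal, hsub p,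
      ← Complex.ofReal_mul]
    congr 1
    field_simp
  calc 𝓕 (fun p : E2 => (Real.exp (-‖p‖) : ℂ)) ζ
      = ∫ p : E2, e p * (Real.exp (-‖p‖) : ℂ) := by
        simp only [Real.fourier_eq', smul_eq_mul, he]
    _ = ((√π)⁻¹ : ℝ) * ∫ p : E2, ∫ u in Ioi (0:ℝ), F p u := by
        rw [← integral_const_mul]
        refine integral_congr_ae (Filter.Eventually.of_forall (fun p => ?_))
        show e p * (Real.exp (-‖p‖) : ℂ) = ((√π)⁻¹ : ℝ) * ∫ u in Ioi (0:ℝ), F p u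
        rw [hcoer p]
        simp only [hF]
        rw [integral_const_mul]
        ring
    _ = ((√π)⁻¹ : ℝ) * ∫ u in Ioi (0:ℝ), ∫ p : E2, F p u := by
        rw [integral_integral_swap hFint]
    _ = ((√π)⁻¹ : ℝ) * ∫ u in Ioi (0:ℝ),
          (((4*π) * (u^((3:ℝ)/2 - 1) * Real.exp (-(A*u))) : ℝ) : ℂ) := by
        congr 1
        exact setIntegral_congr_fun measurableSet_Ioi hinner
    _ = ((√π)⁻¹ : ℝ) * (((4*π) * ((1/A)^((3:ℝ)/2) * Real.Gamma (3/2)) : ℝ) : ℂ) := by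
        congr 1
        rw [show (∫ u in Ioi (0:ℝ), (((4*π) * (u^((3:ℝ)/2 - 1) * Real.exp (-(A*u))) : ℝ) : ℂ))
            = ((∫ u in Ioi (0:ℝ), (4*π) * (u^((3:ℝ)/2 - 1) * Real.exp (-(A*u))) : ℝ) : ℂ)
            from integral_ofReal]
        congr 1
        rw [integral_const_mul, Real.integral_rpow_mul_exp_neg_mul_Ioi (by norm_num) hA0]
    _ = (((2*π) * A^(-(3:ℝ)/2) : ℝ) : ℂ) := by
        rw [← Complex.ofReal_mul]
        congr 1
        have hgam : Real.Gamma (3/2) = √π / 2 := by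
          rw [show (3:ℝ)/2 = 1/2 + 1 by norm_num, Real.Gamma_add_one (by norm_num),
            Real.Gamma_one_half_eq]
          ring
        have hpow : (1/A)^((3:ℝ)/2) = A^(-(3:ℝ)/2) := by
          rw [one_div, ← Real.rpow_neg_one A, ← Real.rpow_mul hA0.le]
          norm_num
        rw [hgam, hpow]
        field_simp
        ring

/-- The function `φ(x,y) = e^{-√(x²+y²)}` belongs to `H^s(ℝ²)` for every `0 < s < 2`,
where membership in `H^s` is expressed on the Fourier side:
`(1+|ζ|²)^{s/2} 𝓕φ(ζ) ∈ L²`, i.e. `(1+|ζ|²)^s ‖𝓕φ(ζ)‖²` is integrable. -/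
theorem stmt2 (s : ℝ) (hs0 : 0 < s) (hs2 : s < 2) :
    MeasureTheory.Integrable
      (fun ζ : EuclideanSpace ℝ (Fin 2) =>
        (1 + ‖ζ‖ ^ 2) ^ s *
          ‖𝓕 (fun p : EuclideanSpace ℝ (Fin 2) => (Real.exp (-‖p‖) : ℂ)) ζ‖ ^ 2) := by
  have hπ : (3:ℝ) < π := Real.pi_gt_three
  set F₀ : E2 → ℝ := fun ζ =>
    (1 + ‖ζ‖ ^ 2) ^ s * ((2*π) * (1 + 4*π^2*‖ζ‖^2)^(-(3:ℝ)/2))^2 with hF₀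
  have hF₀int : Integrable F₀ := by
    apply Integrable.mono' (g := fun ζ : E2 => (4*π^2 * 2^((3:ℝ)-s)) * (1 + ‖ζ‖)^(-(6-2*s)))
    · refine (integrable_one_add_norm ?_).const_mul _
      simp only [finrank_euclideanSpace_fin]
      norm_num
      linarith
    · apply Continuous.aestronglyMeasurable
      apply Continuous.mul
      · exact (continuous_const.add (continuous_norm.pow 2)).rpow_const
          (fun ζ => Or.inl (by simp only [Pi.add_apply, Pi.pow_apply, Pi.mul_apply]; positivity))
      · exact (continuous_const.mul ((continuous_const.add
          (continuous_const.mul (continuous_norm.pow 2))).rpow_const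
          (fun ζ => Or.inl (by simp only [Pi.add_apply, Pi.pow_apply, Pi.mul_apply]; positivity)))).pow 2
    · filter_upwards with ζ
      set A : ℝ := 1 + 4*π^2*‖ζ‖^2 with hA
      have hA0 : (0:ℝ) < A := by positivity
      have hB0 : (0:ℝ) < 1 + ‖ζ‖^2 := by positivity
      have hnz : (0:ℝ) ≤ ‖ζ‖ := norm_nonneg ζ
      have hsq : ((2*π) * A^(-(3:ℝ)/2))^2 = 4*π^2 * A^(-(3:ℝ)) := by
        rw [mul_pow, ← Real.rpow_natCast (A ^ (-(3:ℝ)/2)) 2, ← Real.rpow_mul hA0.le,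
          show (-(3:ℝ)/2) * ((2:ℕ):ℝ) = -3 by push_cast; ring]
        ring
      simp only [hF₀]
      rw [← hA, Real.norm_eq_abs,
        _root_.abs_of_nonneg (mul_nonneg (Real.rpow_nonneg hB0.le s) (sq_nonneg _)), hsq]
      have b1 : A^(-(3:ℝ)) ≤ (1 + ‖ζ‖^2)^(-(3:ℝ)) := by
        refine Real.rpow_le_rpow_of_nonpos hB0 ?_ (by norm_num)
        rw [hA]
        have h9 : (9:ℝ) < π^2 := by nlinarith
        nlinarith [sq_nonneg ‖ζ‖, mul_le_mul_of_nonneg_right (le_of_lt h9) (sq_nonneg ‖ζ‖)]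
      have b2 : (1 + ‖ζ‖^2)^s * (1 + ‖ζ‖^2)^(-(3:ℝ)) = (1 + ‖ζ‖^2)^(s-3) := by
        rw [← Real.rpow_add hB0]
        ring_nf
      have b3 : (1 + ‖ζ‖^2)^(s-3) ≤ ((1 + ‖ζ‖)^2/2)^(s-3) := by
        refine Real.rpow_le_rpow_of_nonpos (by positivity) ?_ (by linarith)
        nlinarith [sq_nonneg (1 - ‖ζ‖)]
      have b4 : ((1 + ‖ζ‖)^2/2)^(s-3) = 2^((3:ℝ)-s) * (1 + ‖ζ‖)^(-(6-2*s)) := by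
        rw [Real.div_rpow (by positivity) (by norm_num),
          ← Real.rpow_natCast (1 + ‖ζ‖) 2, ← Real.rpow_mul (by positivity)]
        rw [div_eq_mul_inv, ← Real.rpow_neg (by norm_num : (0:ℝ) ≤ 2)]
        rw [show ((2:ℕ):ℝ) * (s - 3) = -(6 - 2*s) by push_cast; ring,
          show -(s-3) = (3:ℝ)-s by ring]
        ring
      calc (1 + ‖ζ‖^2)^s * (4*π^2 * A^(-(3:ℝ)))
          = 4*π^2 * ((1 + ‖ζ‖^2)^s * A^(-(3:ℝ))) := by ring
        _ ≤ 4*π^2 * ((1 + ‖ζ‖^2)^s * (1 + ‖ζ‖^2)^(-(3:ℝ))) := by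
            apply mul_le_mul_of_nonneg_left _ (by positivity)
            exact mul_le_mul_of_nonneg_left b1 (by positivity)
        _ = 4*π^2 * (1 + ‖ζ‖^2)^(s-3) := by rw [b2]
        _ ≤ 4*π^2 * (((1 + ‖ζ‖)^2/2)^(s-3)) := by
            exact mul_le_mul_of_nonneg_left b3 (by positivity)
        _ = (4*π^2 * 2^((3:ℝ)-s)) * (1 + ‖ζ‖)^(-(6-2*s)) := by rw [b4]; ring
  refine hF₀int.congr (Filter.Eventually.of_forall (fun ζ => ?_))
  beta_reduce
  congr 1
  rw [ftval ζ, Complex.norm_real, Real.norm_eq_abs, _root_.abs_of_nonneg (by positivity)]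

end
end MainProof
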